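/- arXiv:2506.19422 — 4 statements merged into one kernel-verified Lean document; each statement's English description precedes it below -/
import Mathlib

section
/- In the setting of the Hardy-type test family u_ε, there exist constants c₂ ≥ c₁ > 0 and ε₀ ∈ (0,1) such that for all ε ∈ (0, ε₀): c₁ |log ε|^{2α+1} ≤ B_ε := ∫_{B_1} u_ε(x)²/|x|² dx ≤ c₂ |log ε|^{2α+1}. -/
open MeasureTheory Metric Set

/-- The logarithmic cut-off `η_ε`. -/
noncomputable def eta (ξ : ℝ → ℝ) (ε r : ℝ) : ℝ :=
  if r < ε ^ 2 then 0
  else if r ≤ ε then ξ (Real.log (r / ε ^ 2) / Real.log (1 / ε))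
  else 1

/-- The Hardy-type test family
`u_ε(x) = |x|^{-(N-2)/2} (log(1/|x|))^α η_ε(|x|) ψ(|x|)`. -/
noncomputable def uTest (N : ℕ) (ξ ψ : ℝ → ℝ) (α ε : ℝ)
    (x : EuclideanSpace ℝ (Fin N)) : ℝ :=
  ‖x‖ ^ (-(((N : ℝ) - 2) / 2)) * Real.log (1 / ‖x‖) ^ α * eta ξ ε ‖x‖ * ψ ‖x‖

lemma measurable_eta (ξ : ℝ → ℝ) (hξ : Continuous ξ) (ε : ℝ) : Measurable (eta ξ ε) := by
  unfold eta
  refine Measurable.ite (measurableSet_lt measurable_id measurable_const) measurable_const ?_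
  refine Measurable.ite (measurableSet_le measurable_id measurable_const) ?_ measurable_const
  exact hξ.measurable.comp
    ((Real.measurable_log.comp (measurable_id.div measurable_const)).div_const _)

lemma eta_zero (ξ : ℝ → ℝ) (hξ0 : ξ 0 = 0) {ε y : ℝ} (hε0 : 0 < ε) (hε1 : ε < 1)
    (hy : y ≤ ε ^ 2) : eta ξ ε y = 0 := by
  unfold eta
  by_cases hlt : y < ε ^ 2
  · simp [hlt]
  · have hEq : y = ε ^ 2 := le_antisymm hy (not_lt.mp hlt)
    have h3 : y ≤ ε := by nlinarith
    rw [if_neg hlt, if_pos h3, hEq, div_self (by positivity : (ε:ℝ)^2 ≠ 0),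
      Real.log_one, zero_div, hξ0]

lemma eta_one (ξ : ℝ → ℝ) (hξ1 : ξ 1 = 1) {ε y : ℝ} (hε0 : 0 < ε) (hε1 : ε < 1)
    (hy : ε ≤ y) : eta ξ ε y = 1 := by
  unfold eta
  have hne : ¬ (y < ε ^ 2) := by nlinarith
  rcases lt_or_eq_of_le hy with h | h
  · simp [hne, not_le.mpr h]
  · have h3 : y ≤ ε := le_of_eq h.symm
    have hεne : Real.log (1/ε) ≠ 0 := by
      have : 0 < Real.log (1/ε) := Real.log_pos (by rw [lt_div_iff₀ hε0]; linarith)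
      exact this.ne'
    have harg : Real.log (y / ε ^ 2) = Real.log (1 / ε) := by
      rw [← h]
      congr 1
      field_simp
    rw [if_neg hne, if_pos h3, harg, div_self hεne, hξ1]

lemma eta_mem (ξ : ℝ → ℝ) (hξmem : ∀ t ∈ Icc (0:ℝ) 1, ξ t ∈ Icc (0:ℝ) 1)
    {ε : ℝ} (hε0 : 0 < ε) (hε1 : ε < 1) (y : ℝ) : eta ξ ε y ∈ Icc (0:ℝ) 1 := by
  unfold eta
  split_ifs with h1 h2
  · exact ⟨le_refl 0, zero_le_one⟩
  · apply hξmem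
    have hy0 : (0:ℝ) < ε ^ 2 := by positivity
    have hyy : ε ^ 2 ≤ y := not_lt.mp h1
    have hLpos : 0 < Real.log (1/ε) := Real.log_pos (by rw [lt_div_iff₀ hε0]; linarith)
    constructor
    · apply div_nonneg _ hLpos.le
      apply Real.log_nonneg
      rw [le_div_iff₀ hy0]
      linarith
    · rw [div_le_one hLpos]
      apply Real.log_le_log (div_pos (lt_of_lt_of_le hy0 hyy) hy0)
      rw [div_le_div_iff₀ hy0 hε0]
      nlinarith
  · exact ⟨zero_le_one, le_refl 1⟩


noncomputable def Fr (N : ℕ) (ξ ψ : ℝ → ℝ) (α ε : ℝ) (r : ℝ) : ℝ :=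
  (r ^ (-(((N : ℝ) - 2) / 2)) * Real.log (1 / r) ^ α * eta ξ ε r * ψ r) ^ 2 / r ^ 2

noncomputable def hr (N : ℕ) (ξ ψ : ℝ → ℝ) (α ε : ℝ) (y : ℝ) : ℝ :=
  y ^ (N - 1) * Fr N ξ ψ α ε y

lemma measurable_Fr (N : ℕ) (ξ ψ : ℝ → ℝ) (hξ : Continuous ξ) (hψ : Continuous ψ)
    (α ε : ℝ) : Measurable (Fr N ξ ψ α ε) := by
  unfold Fr
  have m1 : Measurable fun r : ℝ => r ^ (-(((N : ℝ) - 2) / 2)) := by measurability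
  have m2 : Measurable fun r : ℝ => Real.log (1 / r) ^ α := by measurability
  have m3 : Measurable (eta ξ ε) := by
    unfold eta
    refine Measurable.ite (measurableSet_lt measurable_id measurable_const) measurable_const ?_
    refine Measurable.ite (measurableSet_le measurable_id measurable_const) ?_ measurable_const
    exact hξ.measurable.comp
      ((Real.measurable_log.comp (measurable_id.div measurable_const)).div_const _)
  exact ((((m1.mul m2).mul m3).mul hψ.measurable).pow_const 2).div
    (measurable_id.pow_const 2)


lemma key_alg (N : ℕ) (hN : 3 ≤ N) (α : ℝ) (y t : ℝ) (hy0 : 0 < y) (hy1 : y < 1) :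
    y ^ (N-1) * ((y ^ (-(((N:ℝ)-2)/2)) * Real.log (1/y) ^ α * t)^2 / y^2)
      = Real.log (1/y) ^ (2*α) / y * t^2 := by
  set L : ℝ := Real.log (1/y) with hL
  have hLnn : 0 ≤ L := by
    rw [hL]
    apply Real.log_nonneg
    rw [le_div_iff₀ hy0]
    linarith
  have h1 : (y ^ (-(((N:ℝ)-2)/2)))^2 = y ^ (-((N:ℝ)-2)) := by
    rw [← Real.rpow_natCast (y ^ (-(((N:ℝ)-2)/2))) 2, ← Real.rpow_mul hy0.le]
    norm_num
  have h2 : (L ^ α)^2 = L ^ (2*α) := by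
    rw [← Real.rpow_natCast (L ^ α) 2, ← Real.rpow_mul hLnn]
    ring_nf
  have h3 : y ^ (N-1) = y ^ ((N:ℝ)-1) := by
    rw [← Real.rpow_natCast y (N-1), Nat.cast_sub (by omega), Nat.cast_one]
  have h4 : (y:ℝ)^2 = y ^ ((2:ℝ)) := by
    rw [← Real.rpow_natCast y 2]; norm_num
  have h5 : y ^ ((N:ℝ)-1) * y ^ (-((N:ℝ)-2)) / y ^ ((2:ℝ)) = 1/y := by
    rw [← Real.rpow_add hy0, ← Real.rpow_sub hy0]
    have : (N:ℝ) - 1 + -((N:ℝ)-2) - 2 = -1 := by ring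
    rw [this, Real.rpow_neg_one, one_div]
  calc y ^ (N-1) * ((y ^ (-(((N:ℝ)-2)/2)) * L ^ α * t)^2 / y^2)
      = (y ^ ((N:ℝ)-1) * y ^ (-((N:ℝ)-2)) / y ^ ((2:ℝ))) * (L^(2*α)) * t^2 := by
        rw [← h1, ← h2, ← h3, ← h4]; ring
    _ = Real.log (1/y) ^ (2*α) / y * t^2 := by rw [h5]; ring


lemma ftc_log (α : ℝ) (hα : 0 ≤ α) {a b : ℝ} (ha : 0 < a) (hab : a ≤ b) (hb : b < 1) :
    ∫ y in a..b, Real.log (1/y) ^ (2*α) / y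
      = (Real.log (1/a) ^ (2*α+1) - Real.log (1/b) ^ (2*α+1)) / (2*α+1) := by
  set p : ℝ := 2*α+1 with hp
  have hp1 : (1:ℝ) ≤ p := by simp [hp]; linarith
  have hp0 : (0:ℝ) < p := by linarith
  have huIcc : uIcc a b = Icc a b := uIcc_of_le hab
  have hmem : ∀ y ∈ uIcc a b, 0 < y ∧ y < 1 := by
    intro y hy
    rw [huIcc] at hy
    exact ⟨lt_of_lt_of_le ha hy.1, lt_of_le_of_lt hy.2 hb⟩
  have hderiv : ∀ y ∈ uIcc a b,
      HasDerivAt (fun y => -(Real.log (1/y) ^ p) / p) (Real.log (1/y) ^ (2*α) / y) y := by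
    intro y hy
    obtain ⟨hy0, hy1⟩ := hmem y hy
    have h1 : HasDerivAt (fun y : ℝ => Real.log (1/y)) (-(y⁻¹)) y := by
      have := (Real.hasDerivAt_log (ne_of_gt hy0)).neg
      exact this.congr_of_eventuallyEq (Filter.Eventually.of_forall fun z => by
        simp [one_div, Real.log_inv])
    have h2 := h1.rpow_const (p := p) (Or.inr hp1)
    have h3 := (h2.neg).div_const p
    refine h3.congr_deriv ?_
    have hpe : p - 1 = 2*α := by ring
    rw [hpe]
    field_simp
  have hcont : ContinuousOn (fun y => Real.log (1/y) ^ (2*α) / y) (uIcc a b) := by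
    have hsub : uIcc a b ⊆ {y : ℝ | 0 < y} := fun y hy => (hmem y hy).1
    have hlog : ContinuousOn (fun y : ℝ => Real.log (1/y)) (uIcc a b) := by
      have : ContinuousOn (fun y : ℝ => -Real.log y) (uIcc a b) :=
        (Real.continuousOn_log.mono (fun y hy => ne_of_gt (hmem y hy).1)).neg
      simpa [one_div, Real.log_inv] using this
    exact (hlog.rpow_const (fun y hy => Or.inr (by linarith))).div continuousOn_id
      (fun y hy => ne_of_gt (hmem y hy).1)
  rw [intervalIntegral.integral_eq_sub_of_hasDerivAt hderiv (hcont.intervalIntegrable)]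
  ring

set_option maxHeartbeats 1000000 in
/-- Two-sided estimate `B_ε = ∫_{B_1} u_ε²/|x|² ≃ |log ε|^{2α+1}`. -/
theorem Beps_two_sided (N : ℕ) (hN : 3 ≤ N) (α μ : ℝ) (hα : 0 ≤ α)
    (hμ0 : 0 < μ) (hμ1 : μ < 1)
    (ξ : ℝ → ℝ) (hξ : ContDiff ℝ (⊤ : ℕ∞) ξ)
    (hξmem : ∀ t ∈ Icc (0 : ℝ) 1, ξ t ∈ Icc (0 : ℝ) 1)
    (hξ0 : ∀ t ∈ Icc (0 : ℝ) μ, ξ t = 0)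
    (hξ1 : ∀ t ∈ Icc (1 - μ) (1 : ℝ), ξ t = 1)
    (ψ : ℝ → ℝ) (hψ : ContDiff ℝ (⊤ : ℕ∞) ψ)
    (hψmem : ∀ t : ℝ, ψ t ∈ Icc (0 : ℝ) 1)
    (hψ1 : ∀ t : ℝ, |t| ≤ 1 / 4 → ψ t = 1)
    (hψ0 : ∀ t : ℝ, 1 / 2 ≤ |t| → ψ t = 0) :
    ∃ c₁ c₂ ε₀ : ℝ, 0 < c₁ ∧ c₁ ≤ c₂ ∧ 0 < ε₀ ∧ ε₀ < 1 ∧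
      ∀ ε ∈ Ioo (0 : ℝ) ε₀,
        c₁ * |Real.log ε| ^ (2 * α + 1)
            ≤ (∫ x in ball (0 : EuclideanSpace ℝ (Fin N)) 1,
                (uTest N ξ ψ α ε x) ^ 2 / ‖x‖ ^ 2) ∧
        (∫ x in ball (0 : EuclideanSpace ℝ (Fin N)) 1,
            (uTest N ξ ψ α ε x) ^ 2 / ‖x‖ ^ 2)
          ≤ c₂ * |Real.log ε| ^ (2 * α + 1) := by
  haveI : Nonempty (Fin N) := ⟨⟨0, by omega⟩⟩
  set c : ℝ := (N : ℝ) * (volume (ball (0 : EuclideanSpace ℝ (Fin N)) 1)).toReal with hc_def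
  have hvol : 0 < (volume (ball (0 : EuclideanSpace ℝ (Fin N)) 1)).toReal :=
    ENNReal.toReal_pos (measure_ball_pos volume 0 one_pos).ne' measure_ball_lt_top.ne
  have hc : 0 < c := mul_pos (by exact_mod_cast (by omega : 0 < N)) hvol
  set p : ℝ := 2 * α + 1 with hp_def
  have hp0 : 0 < p := by rw [hp_def]; linarith
  have hp1 : 1 ≤ p := by rw [hp_def]; linarith
  have h2p : (2 : ℝ) ≤ 2 ^ p := by
    calc (2:ℝ) = 2 ^ (1:ℝ) := (Real.rpow_one 2).symm
    _ ≤ 2 ^ p := Real.rpow_le_rpow_of_exponent_le one_le_two hp1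
  refine ⟨c / (2 * p), c * 2 ^ p / p, 1/16, by positivity, ?_, by norm_num, by norm_num, ?_⟩
  · rw [div_le_div_iff₀ (by positivity) hp0]
    nlinarith [mul_le_mul_of_nonneg_left h2p (mul_pos hc hp0).le, mul_pos hc hp0]
  intro ε hε
  obtain ⟨hε0, hε16⟩ := hε
  have hε1 : ε < 1 := by linarith
  set L : ℝ := Real.log (1/ε) with hL_def
  have hlogeps : |Real.log ε| = L := by
    rw [abs_of_neg (Real.log_neg hε0 hε1), hL_def, one_div, Real.log_inv]
  have hL16 : Real.log 16 ≤ L := by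
    rw [hL_def]
    apply Real.log_le_log (by norm_num)
    rw [le_div_iff₀ hε0]; linarith
  have hL0 : 0 < L := lt_of_lt_of_le (Real.log_pos (by norm_num)) hL16
  have hlog4 : Real.log 4 ≤ L / 2 := by
    have h2 : Real.log 16 = 2 * Real.log 4 := by
      rw [show (16:ℝ) = 4 ^ (2:ℕ) by norm_num, Real.log_pow]
      push_cast; ring
    linarith
  have hlog4pos : (0:ℝ) ≤ Real.log 4 := Real.log_nonneg (by norm_num)
  have hlog2pos : (0:ℝ) ≤ Real.log 2 := Real.log_nonneg (by norm_num)
  have hξ00 : ξ 0 = 0 := hξ0 0 ⟨le_refl 0, hμ0.le⟩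
  have hξ11 : ξ 1 = 1 := hξ1 1 ⟨by linarith, le_refl 1⟩
  -- Step A: reduce to an integral over all of space
  have hA : (∫ x in ball (0 : EuclideanSpace ℝ (Fin N)) 1, (uTest N ξ ψ α ε x)^2 / ‖x‖^2)
      = ∫ x : EuclideanSpace ℝ (Fin N), Fr N ξ ψ α ε ‖x‖ := by
    have huF : ∀ x : EuclideanSpace ℝ (Fin N),
        (uTest N ξ ψ α ε x)^2 / ‖x‖^2 = Fr N ξ ψ α ε ‖x‖ := fun x => rfl
    simp_rw [huF]
    apply setIntegral_eq_integral_of_forall_compl_eq_zero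
    intro x hx
    have hx1 : 1 ≤ ‖x‖ := by
      simp only [mem_ball, dist_zero_right, not_lt] at hx; exact hx
    have hψx : ψ ‖x‖ = 0 := hψ0 _ (by rw [abs_of_nonneg (norm_nonneg x)]; linarith)
    simp [Fr, hψx]
  -- Step B: polar coordinates
  have hdim : Module.finrank ℝ (EuclideanSpace ℝ (Fin N)) = N := finrank_euclideanSpace_fin
  have hB : (∫ x : EuclideanSpace ℝ (Fin N), Fr N ξ ψ α ε ‖x‖)
      = c * ∫ y in Ioi (0:ℝ), hr N ξ ψ α ε y := by
    rw [integral_fun_norm_addHaar (volume : Measure (EuclideanSpace ℝ (Fin N))) (Fr N ξ ψ α ε)]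
    simp only [hdim, nsmul_eq_mul, smul_eq_mul]
    rw [hc_def, mul_assoc]
    rfl
  -- pointwise description of hr
  have hbase : ∀ y : ℝ, 0 < y → y < 1 →
      hr N ξ ψ α ε y = Real.log (1/y) ^ (2*α) / y * (eta ξ ε y * ψ y)^2 := by
    intro y hy0 hy1
    have e1 : y ^ (-(((N:ℝ)-2)/2)) * Real.log (1/y) ^ α * eta ξ ε y * ψ y
        = y ^ (-(((N:ℝ)-2)/2)) * Real.log (1/y) ^ α * (eta ξ ε y * ψ y) := by ring
    show y ^ (N-1) * Fr N ξ ψ α ε y = _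
    unfold Fr
    rw [e1]
    exact key_alg N hN α y _ hy0 hy1
  have hg_nonneg : ∀ y ∈ Ioc (ε^2) (1/2:ℝ), 0 ≤ Real.log (1/y) ^ (2*α) / y := by
    intro y hy
    have hy0 : 0 < y := lt_trans (by positivity) hy.1
    have hlognn : 0 ≤ Real.log (1/y) := Real.log_nonneg (by rw [le_div_iff₀ hy0]; linarith [hy.2])
    positivity
  have hh_nonneg : ∀ y : ℝ, 0 ≤ y → 0 ≤ hr N ξ ψ α ε y := by
    intro y hy
    unfold hr Fr
    positivity
  have hzero : ∀ y ∈ Ioi (0:ℝ) \ Ioc (ε^2) (1/2:ℝ), hr N ξ ψ α ε y = 0 := by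
    intro y hy
    obtain ⟨hy0, hy2⟩ := hy
    rw [mem_Ioc, not_and_or] at hy2
    unfold hr Fr
    rcases hy2 with h | h
    · push_neg at h
      rw [eta_zero ξ hξ00 hε0 hε1 h]
      simp
    · push_neg at h
      rw [hψ0 y (by rw [abs_of_nonneg (le_of_lt hy0)]; linarith)]
      simp
  have hhle : ∀ y ∈ Ioc (ε^2) (1/2:ℝ), hr N ξ ψ α ε y ≤ Real.log (1/y) ^ (2*α) / y := by
    intro y hy
    have hy0 : 0 < y := lt_trans (by positivity) hy.1
    have hy1 : y < 1 := by linarith [hy.2]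
    rw [hbase y hy0 hy1]
    have h1 := eta_mem ξ hξmem hε0 hε1 y
    have h2 := hψmem y
    have hab0 : 0 ≤ eta ξ ε y * ψ y := mul_nonneg h1.1 h2.1
    have hab1 : eta ξ ε y * ψ y ≤ 1 := mul_le_one₀ h1.2 h2.1 h2.2
    have ht : (eta ξ ε y * ψ y)^2 ≤ 1 := by nlinarith
    calc Real.log (1/y) ^ (2*α) / y * (eta ξ ε y * ψ y)^2
        ≤ Real.log (1/y) ^ (2*α) / y * 1 :=
          mul_le_mul_of_nonneg_left ht (hg_nonneg y hy)
      _ = _ := mul_one _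
  -- integrability
  have hgcont : IntegrableOn (fun y => Real.log (1/y) ^ (2*α) / y) (Ioc (ε^2) (1/2:ℝ)) := by
    have hpos : ∀ y ∈ Icc (ε^2) (1/2:ℝ), 0 < y := fun y hy => lt_of_lt_of_le (by positivity) hy.1
    have hlog : ContinuousOn (fun y : ℝ => Real.log (1/y)) (Icc (ε^2) (1/2)) := by
      have : ContinuousOn (fun y : ℝ => -Real.log y) (Icc (ε^2) (1/2)) :=
        (Real.continuousOn_log.mono (fun y hy => ne_of_gt (hpos y hy))).neg
      simpa [one_div, Real.log_inv] using this
    exact (((hlog.rpow_const (fun y hy => Or.inr (by positivity))).div continuousOn_id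
      (fun y hy => ne_of_gt (hpos y hy))).integrableOn_Icc).mono_set Ioc_subset_Icc_self
  have hmeas : Measurable (hr N ξ ψ α ε) := by
    unfold hr
    exact (measurable_id.pow_const _).mul (measurable_Fr N ξ ψ hξ.continuous hψ.continuous α ε)
  have hImid : IntegrableOn (hr N ξ ψ α ε) (Ioc (ε^2) (1/2:ℝ)) := by
    apply Integrable.mono hgcont hmeas.aestronglyMeasurable.restrict
    filter_upwards [ae_restrict_mem measurableSet_Ioc] with y hy
    rw [Real.norm_eq_abs, Real.norm_eq_abs,
      abs_of_nonneg (hh_nonneg y (le_of_lt (lt_trans (by positivity) hy.1)))]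
    exact le_trans (hhle y hy) (le_abs_self _)
  have hsub2 : Ioc (ε^2) (1/2:ℝ) ⊆ Ioi (0:ℝ) := fun y hy => lt_trans (by positivity) hy.1
  have hIoi : IntegrableOn (hr N ξ ψ α ε) (Ioi (0:ℝ)) :=
    hImid.of_forall_diff_eq_zero measurableSet_Ioi hzero
  -- value of the Ioi-integral: upper bound
  have hε2half : ε^2 ≤ (1/2:ℝ) := by nlinarith
  have hIeq : (∫ y in Ioi (0:ℝ), hr N ξ ψ α ε y) = ∫ y in Ioc (ε^2) (1/2:ℝ), hr N ξ ψ α ε y :=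
    setIntegral_eq_of_subset_of_ae_diff_eq_zero measurableSet_Ioi.nullMeasurableSet hsub2
      (ae_of_all _ hzero)
  have hL2 : Real.log (1/ε^2) = 2 * L := by
    rw [show (1:ℝ)/ε^2 = (1/ε)^(2:ℕ) by rw [one_div, one_div, ← inv_pow], Real.log_pow, hL_def]
    push_cast; ring
  have hup : (∫ y in Ioi (0:ℝ), hr N ξ ψ α ε y) ≤ (2*L) ^ p / p := by
    rw [hIeq]
    have step1 : (∫ y in Ioc (ε^2) (1/2:ℝ), hr N ξ ψ α ε y)
        ≤ ∫ y in Ioc (ε^2) (1/2:ℝ), Real.log (1/y) ^ (2*α) / y :=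
      setIntegral_mono_on hImid hgcont measurableSet_Ioc hhle
    have step2 : (∫ y in Ioc (ε^2) (1/2:ℝ), Real.log (1/y) ^ (2*α) / y)
        = (Real.log (1/ε^2) ^ p - Real.log (1/(1/2:ℝ)) ^ p) / p := by
      rw [← intervalIntegral.integral_of_le hε2half]
      exact ftc_log α hα (by positivity) hε2half (by norm_num)
    have step3 : (Real.log (1/ε^2) ^ p - Real.log (1/(1/2:ℝ)) ^ p) / p ≤ (2*L) ^ p / p := by
      rw [hL2, show (1:ℝ)/(1/2:ℝ) = 2 by norm_num]
      apply div_le_div_of_nonneg_right ?_ hp0.le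
      · linarith [Real.rpow_nonneg hlog2pos p]
    linarith
  have hup2 : c * (∫ y in Ioi (0:ℝ), hr N ξ ψ α ε y) ≤ (c * 2 ^ p / p) * L ^ p := by
    have h2L : (2*L) ^ p = 2 ^ p * L ^ p := Real.mul_rpow (by norm_num) hL0.le
    calc c * (∫ y in Ioi (0:ℝ), hr N ξ ψ α ε y) ≤ c * ((2*L) ^ p / p) :=
          mul_le_mul_of_nonneg_left hup hc.le
      _ = (c * 2 ^ p / p) * L ^ p := by rw [h2L]; ring
  -- lower bound
  have hεquarter : ε ≤ (1/4:ℝ) := by linarith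
  have hlow_eq : (∫ y in Ioc ε (1/4:ℝ), hr N ξ ψ α ε y)
      = ∫ y in Ioc ε (1/4:ℝ), Real.log (1/y) ^ (2*α) / y := by
    apply setIntegral_congr_fun measurableSet_Ioc
    intro y hy
    have hy0 : 0 < y := lt_trans hε0 hy.1
    have hy1 : y < 1 := by linarith [hy.2]
    rw [hbase y hy0 hy1, eta_one ξ hξ11 hε0 hε1 hy.1.le,
      hψ1 y (by rw [abs_of_nonneg hy0.le]; exact hy.2)]
    norm_num
  have hmono : (∫ y in Ioc ε (1/4:ℝ), hr N ξ ψ α ε y) ≤ ∫ y in Ioi (0:ℝ), hr N ξ ψ α ε y := by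
    apply setIntegral_mono_set hIoi
    · filter_upwards [ae_restrict_mem measurableSet_Ioi] with y hy
      exact hh_nonneg y (le_of_lt hy)
    · exact HasSubset.Subset.eventuallyLE (fun y hy => lt_trans hε0 hy.1)
  have hval : (∫ y in Ioc ε (1/4:ℝ), Real.log (1/y) ^ (2*α) / y)
      = (L ^ p - Real.log (1/(1/4:ℝ)) ^ p) / p := by
    rw [← intervalIntegral.integral_of_le hεquarter]
    exact ftc_log α hα hε0 hεquarter (by norm_num)
  have hq : Real.log (1/(1/4:ℝ)) ^ p ≤ L ^ p / 2 := by
    rw [show (1:ℝ)/(1/4:ℝ) = 4 by norm_num]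
    have e1 : Real.log 4 ^ p ≤ (L/2) ^ p := Real.rpow_le_rpow hlog4pos hlog4 hp0.le
    have e2 : (L/2) ^ p = L ^ p / 2 ^ p := Real.div_rpow hL0.le (by norm_num : (0:ℝ) ≤ 2) p
    have e3 : L ^ p / 2 ^ p ≤ L ^ p / 2 :=
      div_le_div_of_nonneg_left (Real.rpow_nonneg hL0.le p) two_pos h2p
    linarith
  have hlow2 : (c / (2*p)) * L ^ p ≤ c * (∫ y in Ioi (0:ℝ), hr N ξ ψ α ε y) := by
    have e1 : L ^ p / (2*p) ≤ (L ^ p - Real.log (1/(1/4:ℝ)) ^ p) / p := by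
      rw [div_le_div_iff₀ (by positivity) hp0]
      nlinarith [Real.rpow_nonneg hL0.le p]
    calc (c / (2*p)) * L ^ p = c * (L ^ p / (2*p)) := by ring
      _ ≤ c * ((L ^ p - Real.log (1/(1/4:ℝ)) ^ p) / p) := mul_le_mul_of_nonneg_left e1 hc.le
      _ = c * (∫ y in Ioc ε (1/4:ℝ), Real.log (1/y) ^ (2*α) / y) := by rw [hval]
      _ = c * (∫ y in Ioc ε (1/4:ℝ), hr N ξ ψ α ε y) := by rw [hlow_eq]
      _ ≤ c * (∫ y in Ioi (0:ℝ), hr N ξ ψ α ε y) := mul_le_mul_of_nonneg_left hmono hc.le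
  rw [hlogeps]
  rw [hA, hB]
  exact ⟨hlow2, hup2⟩
end

section
/- Let N ≥ 1 and let T ⊂ ℝ^N be a measurable set contained in the closed ball of radius 1/2 centered at the origin. Let 0 < h ≤ 1/4 and suppose the Lebesgue measure of T satisfies |T| ≥ 2 |B(0, h²)|, where B(0, h²) is the ball of radius h². Then ∫_T (log|x|)^{−2} dx ≥ |T| / (8 (log h)²). In particular, for the simplices of a regular quasi-uniform mesh of size h (whose elements have measure at least c h^N), one has ∫_T (log|x|)^{−2} dx ≳ |T| / |log h|² for h small. -/
open MeasureTheory Metric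

/-- Lower bound for the logarithmic weight on a small set: if
`T ⊆ closedBall 0 (1/2)` is measurable, `0 < h ≤ 1/4` and
`|T| ≥ 2 |B(0,h²)|`, then `∫_T (log|x|)^{-2} dx ≥ |T| / (8 (log h)²)`. -/
theorem log_weight_lower_bound (N : ℕ) (hN : 1 ≤ N)
    (T : Set (EuclideanSpace ℝ (Fin N))) (hTm : MeasurableSet T)
    (hTsub : T ⊆ closedBall (0 : EuclideanSpace ℝ (Fin N)) (1 / 2))
    (h : ℝ) (h0 : 0 < h) (h14 : h ≤ 1 / 4)
    (hvol : 2 * (volume (ball (0 : EuclideanSpace ℝ (Fin N)) (h ^ 2))).toReal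
      ≤ (volume T).toReal) :
    (volume T).toReal / (8 * (Real.log h) ^ 2)
      ≤ ∫ x in T, ((Real.log ‖x‖) ^ 2)⁻¹ := by
  set B := ball (0 : EuclideanSpace ℝ (Fin N)) (h ^ 2) with hB
  set f : EuclideanSpace ℝ (Fin N) → ℝ := fun x => ((Real.log ‖x‖) ^ 2)⁻¹ with hf
  have hlh : Real.log h < 0 := Real.log_neg h0 (by linarith)
  have hlhne : Real.log h ≠ 0 := ne_of_lt hlh
  have hlh2 : 0 < (Real.log h) ^ 2 := by positivity
  -- finiteness of measures
  have hTfin : volume T ≠ ⊤ := by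
    refine ne_top_of_le_ne_top ?_ (measure_mono hTsub)
    exact (measure_closedBall_lt_top).ne
  have hBfin : volume B ≠ ⊤ := measure_ball_lt_top.ne
  -- nonnegativity of f
  have hfnn : ∀ x, 0 ≤ f x := fun x => by positivity
  -- measurability
  have hfm : Measurable f := by
    apply Measurable.inv
    exact ((Real.measurable_log.comp measurable_norm).pow_const 2)
  -- f is bounded on T
  have hlog12 : Real.log (1/2) < 0 := Real.log_neg (by norm_num) (by norm_num)
  have hbound : ∀ x ∈ T, f x ≤ ((Real.log (1/2)) ^ 2)⁻¹ := by
    intro x hx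
    have hxle : ‖x‖ ≤ 1/2 := by
      have := hTsub hx
      simpa [mem_closedBall, dist_eq_norm] using this
    rcases eq_or_lt_of_le (norm_nonneg x) with h0x | h0x
    · simp [hf, ← h0x, Real.log_zero]
      positivity
    · have hlx : Real.log ‖x‖ ≤ Real.log (1/2) :=
        Real.log_le_log h0x hxle
      have hsq : (Real.log (1/2)) ^ 2 ≤ (Real.log ‖x‖) ^ 2 := by
        have h1 : Real.log ‖x‖ ≤ 0 := le_trans hlx hlog12.le
        nlinarith
      exact inv_anti₀ (by positivity) hsq
  have hfint : IntegrableOn f T := by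
    refine Measure.integrableOn_of_bounded (M := ((Real.log (1/2)) ^ 2)⁻¹) hTfin hfm.aestronglyMeasurable ?_
    filter_upwards [ae_restrict_mem hTm] with x hx
    rw [Real.norm_eq_abs, abs_of_nonneg (hfnn x)]
    exact hbound x hx
  -- measure of T \ B
  have hmeas_split : volume (T ∩ B) + volume (T \ B) = volume T :=
    measure_inter_add_diff T measurableSet_ball
  have hTB_fin : volume (T \ B) ≠ ⊤ := ne_top_of_le_ne_top hTfin (measure_mono Set.diff_subset)
  have hTiB_fin : volume (T ∩ B) ≠ ⊤ := ne_top_of_le_ne_top hTfin (measure_mono Set.inter_subset_left)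
  have hsplit : (volume (T ∩ B)).toReal + (volume (T \ B)).toReal = (volume T).toReal := by
    rw [← ENNReal.toReal_add hTiB_fin hTB_fin, hmeas_split]
  have hTiB_le : (volume (T ∩ B)).toReal ≤ (volume B).toReal :=
    ENNReal.toReal_mono hBfin (measure_mono Set.inter_subset_right)
  have hTB_ge : (volume T).toReal / 2 ≤ (volume (T \ B)).toReal := by linarith
  -- pointwise lower bound on T \ B
  set c : ℝ := (4 * (Real.log h) ^ 2)⁻¹ with hc
  have hpt : ∀ x ∈ T \ B, c ≤ f x := by
    intro x hx
    obtain ⟨hxT, hxB⟩ := hx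
    have hxge : h ^ 2 ≤ ‖x‖ := by
      by_contra hcon
      exact hxB (by simpa [hB, mem_ball, dist_eq_norm] using lt_of_not_ge hcon)
    have hxle : ‖x‖ ≤ 1/2 := by
      have := hTsub hxT
      simpa [mem_closedBall, dist_eq_norm] using this
    have hx0 : 0 < ‖x‖ := lt_of_lt_of_le (pow_pos h0 2) hxge
    have hl1 : 2 * Real.log h ≤ Real.log ‖x‖ := by
      have := Real.log_le_log (by positivity) hxge
      rwa [Real.log_pow, Nat.cast_ofNat] at this
    have hl2 : Real.log ‖x‖ ≤ Real.log (1/2) := Real.log_le_log hx0 hxle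
    have hl0 : Real.log ‖x‖ < 0 := lt_of_le_of_lt hl2 hlog12
    have hsq : (Real.log ‖x‖) ^ 2 ≤ 4 * (Real.log h) ^ 2 := by nlinarith
    have hpos : 0 < (Real.log ‖x‖) ^ 2 := by nlinarith
    exact inv_anti₀ hpos hsq
  -- chain of inequalities
  have hstep1 : ∫ x in T \ B, f x ≤ ∫ x in T, f x := by
    refine setIntegral_mono_set hfint ?_ (HasSubset.Subset.eventuallyLE Set.diff_subset)
    filter_upwards with x using hfnn x
  have hstep2 : c * (volume (T \ B)).toReal ≤ ∫ x in T \ B, f x := by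
    have := setIntegral_mono_on (integrableOn_const hTB_fin)
      (hfint.mono_set Set.diff_subset) (hTm.diff measurableSet_ball) hpt
    rw [setIntegral_const] at this
    rwa [mul_comm, ← smul_eq_mul]
  have hfinal : (volume T).toReal / (8 * (Real.log h) ^ 2) ≤ c * (volume (T \ B)).toReal := by
    have hc0 : 0 < c := by positivity
    have heq : (volume T).toReal / (8 * (Real.log h) ^ 2)
        = c * ((volume T).toReal / 2) := by
      rw [hc, inv_mul_eq_div, div_div]
      congr 1
      ring
    rw [heq]
    exact mul_le_mul_of_nonneg_left hTB_ge hc0.le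
  linarith
end

section
/- For every p ∈ (1, ∞) and every dimension N ≥ 1 there exists a constant C = C(N, p) > 0 with the following property: for every compact convex set T ⊂ ℝ^N that contains a closed ball of radius ρ_T > 0, and every function u that is C² on a neighborhood of T, one has inf_{A ∈ ℝ^N} ∫_T |∇u(x) − A|^p dx ≥ C ρ_T^{N+p} max_{ξ ∈ S^{N−1}} min_{x ∈ T} |ξᵀ D²u(x) ξ|^p. The same lower bound holds under the weaker assumption that u is uniformly convex in one coordinate direction, i.e., inf_{x ∈ T} |∂²_{x_k} u(x)| > 0 for some k. -/
open MeasureTheory Metric Set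

private lemma image_add_right_closedBall' {N : ℕ} (a b : EuclideanSpace ℝ (Fin N)) (r : ℝ) :
    (fun x => x + a) '' closedBall b r = closedBall (b + a) r := by
  ext y
  constructor
  · rintro ⟨x, hx, rfl⟩
    rw [mem_closedBall, dist_eq_norm] at hx ⊢
    show ‖x + a - (b + a)‖ ≤ r
    rwa [add_sub_add_right_eq_sub]
  · intro hy
    rw [mem_closedBall, dist_eq_norm] at hy
    refine ⟨y - a, ?_, sub_add_cancel y a⟩
    rw [mem_closedBall, dist_eq_norm, sub_sub, add_comm a b]
    exact hy

set_option maxHeartbeats 3200000 in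
private lemma core_bound {N : ℕ} (p : ℝ) (hp1 : 1 < p)
    {T : Set (EuclideanSpace ℝ (Fin N))} (hT : IsCompact T) (hTc : Convex ℝ T)
    {z : EuclideanSpace ℝ (Fin N)} {ρ : ℝ} (hρ : 0 < ρ) (hball : closedBall z ρ ⊆ T)
    {u : EuclideanSpace ℝ (Fin N) → ℝ} {U : Set (EuclideanSpace ℝ (Fin N))}
    (hU : IsOpen U) (hTU : T ⊆ U) (hu : ContDiffOn ℝ 2 u U)
    {ξ : EuclideanSpace ℝ (Fin N)} (hξ : ‖ξ‖ = 1)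
    {m : ℝ} (hm0 : 0 ≤ m)
    (hm : ∀ x ∈ T, m ≤ |iteratedFDeriv ℝ 2 u x ![ξ, ξ]|)
    (A : EuclideanSpace ℝ (Fin N)) :
    (2⁻¹ * (4 : ℝ)⁻¹ ^ N * (3 / 4 : ℝ) ^ p
        * (volume (ball (0 : EuclideanSpace ℝ (Fin N)) 1)).toReal)
      * ρ ^ ((N : ℝ) + p) * m ^ p ≤ ∫ x in T, ‖gradient u x - A‖ ^ p := by
  have hp0 : (0:ℝ) < p := lt_trans one_pos hp1
  have hInt0 : (0:ℝ) ≤ ∫ x in T, ‖gradient u x - A‖ ^ p :=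
    setIntegral_nonneg hT.measurableSet fun x _ => Real.rpow_nonneg (norm_nonneg _) p
  rcases eq_or_lt_of_le hm0 with hmz | hmpos
  · rw [← hmz, Real.zero_rpow (ne_of_gt hp0), mul_zero]
    exact hInt0
  -- notation
  set q : EuclideanSpace ℝ (Fin N) → ℝ := fun y => fderiv ℝ (fderiv ℝ u) y ξ ξ with hq_def
  have hQq : ∀ y, iteratedFDeriv ℝ 2 u y ![ξ, ξ] = q y := by
    intro y
    rw [iteratedFDeriv_two_apply]
    simp [hq_def]
  have hfd1 : ContDiffOn ℝ 1 (fderiv ℝ u) U := hu.fderiv_of_isOpen (m := 1) hU (by norm_num)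
  have hfdc : ContinuousOn (fderiv ℝ u) U := hfd1.continuousOn
  have hqc : ContinuousOn q U := by
    have h2 : ContinuousOn (fderiv ℝ (fderiv ℝ u)) U :=
      hfd1.continuousOn_fderiv_of_isOpen hU le_rfl
    exact (h2.clm_apply continuousOn_const).clm_apply continuousOn_const
  have hqT : ∀ x ∈ T, m ≤ |q x| := fun x hx => (hQq x) ▸ hm x hx
  -- sign dichotomy
  have hsign : (∀ x ∈ T, m ≤ q x) ∨ (∀ x ∈ T, q x ≤ -m) := by
    by_cases hpos : ∀ x ∈ T, 0 < q x
    · exact Or.inl fun x hx => by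
        have := hqT x hx; rwa [abs_of_pos (hpos x hx)] at this
    · right
      push_neg at hpos
      obtain ⟨a, haT, ha⟩ := hpos
      intro x hx
      by_contra hcon
      push_neg at hcon
      have hqx : 0 < q x := by
        rcases le_or_gt (q x) 0 with h | h
        · have := hqT x hx; rw [abs_of_nonpos h] at this; linarith
        · exact h
      obtain ⟨y, hyT, hy0⟩ :=
        (hTc.isPreconnected.intermediate_value haT hx (hqc.mono hTU))
          (show (0:ℝ) ∈ Icc (q a) (q x) from ⟨ha, le_of_lt hqx⟩)
      have := hqT y hyT
      rw [hy0] at this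
      simp only [abs_zero] at this
      linarith
  set c : ℝ := 3 * ρ / 2 with hc_def
  have hc0 : 0 < c := by rw [hc_def]; linarith
  set w : EuclideanSpace ℝ (Fin N) → ℝ := fun y => fderiv ℝ u y ξ - (inner ℝ A ξ : ℝ) with hw_def
  set Bm : Set (EuclideanSpace ℝ (Fin N)) := closedBall (z - (3*ρ/4) • ξ) (ρ/4) with hBm_def
  set Bp : Set (EuclideanSpace ℝ (Fin N)) := closedBall (z + (3*ρ/4) • ξ) (ρ/4) with hBp_def
  have hnorm_smul : ‖(3*ρ/4 : ℝ) • ξ‖ = 3*ρ/4 := by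
    rw [norm_smul, hξ, mul_one, Real.norm_eq_abs, abs_of_nonneg (by linarith)]
  have hBmT : Bm ⊆ T := by
    refine (closedBall_subset_closedBall' ?_).trans hball
    rw [dist_eq_norm]
    have : z - (3*ρ/4) • ξ - z = -((3*ρ/4 : ℝ) • ξ) := by abel
    rw [this, norm_neg, hnorm_smul]; linarith
  have hBpT : Bp ⊆ T := by
    refine (closedBall_subset_closedBall' ?_).trans hball
    rw [dist_eq_norm]
    have : z + (3*ρ/4) • ξ - z = (3*ρ/4 : ℝ) • ξ := by abel
    rw [this, hnorm_smul]; linarith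
  -- key increment estimate
  have key : ∀ x ∈ Bm, m * c ≤ |w (x + c • ξ) - w x| := by
    intro x hx
    have hxz : ‖x - (z - (3*ρ/4) • ξ)‖ ≤ ρ/4 := by
      rw [hBm_def, mem_closedBall, dist_eq_norm] at hx; exact hx
    have seg : ∀ t ∈ Icc (0:ℝ) c, x + t • ξ ∈ closedBall z ρ := by
      intro t ht
      rw [mem_closedBall, dist_eq_norm]
      have hid : x + t • ξ - z = (x - (z - (3*ρ/4) • ξ)) + (t - 3*ρ/4) • ξ := by module
      rw [hid]
      calc ‖(x - (z - (3*ρ/4) • ξ)) + (t - 3*ρ/4) • ξ‖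
          ≤ ‖x - (z - (3*ρ/4) • ξ)‖ + ‖(t - 3*ρ/4) • ξ‖ := norm_add_le _ _
        _ ≤ ρ/4 + |t - 3*ρ/4| := by
            rw [norm_smul, hξ, mul_one, Real.norm_eq_abs]
            exact add_le_add_left hxz _
        _ ≤ ρ := by
            have h1 := ht.1; have h2 := ht.2
            rw [hc_def] at h2
            have : |t - 3*ρ/4| ≤ 3*ρ/4 := abs_le.mpr ⟨by linarith, by linarith⟩
            linarith
    set f : ℝ → ℝ := fun t => fderiv ℝ u (x + t • ξ) ξ with hf_def
    have hf' : ∀ t ∈ Icc (0:ℝ) c, HasDerivAt f (q (x + t • ξ)) t := by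
      intro t ht
      have hmemU : x + t • ξ ∈ U := hTU (hball (seg t ht))
      have hline : HasDerivAt (fun s : ℝ => x + s • ξ) ξ t := by
        simpa using ((hasDerivAt_id t).smul_const ξ).const_add x
      have hD : HasFDerivAt (fderiv ℝ u) (fderiv ℝ (fderiv ℝ u) (x + t • ξ)) (x + t • ξ) :=
        ((hfd1.differentiableOn one_ne_zero).differentiableAt (hU.mem_nhds hmemU)).hasFDerivAt
      have h1 : HasDerivAt (fun s : ℝ => fderiv ℝ u (x + s • ξ))
          (fderiv ℝ (fderiv ℝ u) (x + t • ξ) ξ) t := hD.comp_hasDerivAt t hline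
      have h2 := (ContinuousLinearMap.apply ℝ ℝ ξ).hasFDerivAt.comp_hasDerivAt t h1
      exact h2
    have hwf : w (x + c • ξ) - w x = f c - f 0 := by
      simp only [hw_def, hf_def, zero_smul, add_zero]
      ring
    rw [hwf]
    rcases hsign with hsgn | hsgn
    · -- q ≥ m : f increasing with slope ≥ m
      set g : ℝ → ℝ := fun t => f t - t * m with hg_def
      have hg' : ∀ t ∈ Icc (0:ℝ) c, HasDerivAt g (q (x + t • ξ) - m) t :=
        fun t ht => (hf' t ht).sub (hasDerivAt_mul_const m)
      have hmono : MonotoneOn g (Icc 0 c) := by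
        refine monotoneOn_of_deriv_nonneg (convex_Icc 0 c)
          (fun t ht => (hg' t ht).continuousAt.continuousWithinAt)
          (fun t ht => ((hg' t (interior_subset ht)).differentiableAt).differentiableWithinAt)
          (fun t ht => ?_)
        have ht' := interior_subset ht
        rw [(hg' t ht').deriv]
        have hmem : x + t • ξ ∈ T := hball (seg t ht')
        have := hsgn _ hmem
        linarith
      have h0c : g 0 ≤ g c :=
        hmono ⟨le_rfl, le_of_lt hc0⟩ ⟨le_of_lt hc0, le_rfl⟩ (le_of_lt hc0)
      have : m * c ≤ f c - f 0 := by
        simp only [hg_def, zero_mul, sub_zero] at h0c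
        linarith
      exact this.trans (le_abs_self _)
    · -- q ≤ -m : f decreasing with slope ≤ -m
      set g : ℝ → ℝ := fun t => f t + t * m with hg_def
      have hg' : ∀ t ∈ Icc (0:ℝ) c, HasDerivAt g (q (x + t • ξ) + m) t :=
        fun t ht => (hf' t ht).add (hasDerivAt_mul_const m)
      have hanti : AntitoneOn g (Icc 0 c) := by
        refine antitoneOn_of_deriv_nonpos (convex_Icc 0 c)
          (fun t ht => (hg' t ht).continuousAt.continuousWithinAt)
          (fun t ht => ((hg' t (interior_subset ht)).differentiableAt).differentiableWithinAt)
          (fun t ht => ?_)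
        have ht' := interior_subset ht
        rw [(hg' t ht').deriv]
        have hmem : x + t • ξ ∈ T := hball (seg t ht')
        have := hsgn _ hmem
        linarith
      have h0c : g c ≤ g 0 :=
        hanti ⟨le_rfl, le_of_lt hc0⟩ ⟨le_of_lt hc0, le_rfl⟩ (le_of_lt hc0)
      have : f c - f 0 ≤ -(m * c) := by
        simp only [hg_def, zero_mul, add_zero] at h0c
        linarith
      calc m * c ≤ -(f c - f 0) := by linarith
        _ ≤ |f c - f 0| := neg_le_abs _
  -- pointwise rpow inequality
  set b : ℝ := 3/4 * ρ * m with hb_def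
  have hb0 : 0 < b := by rw [hb_def]; positivity
  have hpt : ∀ x ∈ Bm, b ^ p ≤ |w (x + c • ξ)| ^ p + |w x| ^ p := by
    intro x hx
    have h1 := key x hx
    have h2 : |w (x + c • ξ) - w x| ≤ |w (x + c • ξ)| + |w x| := abs_sub _ _
    have hcase : b ≤ |w (x + c • ξ)| ∨ b ≤ |w x| := by
      by_contra hcon
      push_neg at hcon
      have : m * c = 2 * b := by rw [hb_def, hc_def]; ring
      have := hcon.1; have := hcon.2
      linarith
    rcases hcase with h | h
    · calc b ^ p ≤ |w (x + c • ξ)| ^ p :=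
            Real.rpow_le_rpow (le_of_lt hb0) h (le_of_lt hp0)
        _ ≤ _ := le_add_of_nonneg_right (Real.rpow_nonneg (abs_nonneg _) p)
    · calc b ^ p ≤ |w x| ^ p := Real.rpow_le_rpow (le_of_lt hb0) h (le_of_lt hp0)
        _ ≤ _ := le_add_of_nonneg_left (Real.rpow_nonneg (abs_nonneg _) p)
  -- continuity / integrability
  have hwU : ContinuousOn w U := (hfdc.clm_apply continuousOn_const).sub continuousOn_const
  have hIT : IntegrableOn (fun y => |w y| ^ p) T := by
    refine ContinuousOn.integrableOn_compact hT ?_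
    exact ((hwU.mono hTU).abs).rpow_const fun x _ => Or.inr (le_of_lt hp0)
  have hgc : ContinuousOn (fun y => gradient u y) U :=
    (InnerProductSpace.toDual ℝ (EuclideanSpace ℝ (Fin N))).symm.continuous.comp_continuousOn hfdc
  have hGT : IntegrableOn (fun y => ‖gradient u y - A‖ ^ p) T := by
    refine ContinuousOn.integrableOn_compact hT ?_
    exact (((hgc.mono hTU).sub continuousOn_const).norm).rpow_const
      fun x _ => Or.inr (le_of_lt hp0)
  have hwle : ∀ y, |w y| ≤ ‖gradient u y - A‖ := by
    intro y
    have h1 : (inner ℝ (gradient u y - A) ξ : ℝ) = w y := by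
      rw [inner_sub_left, hw_def]
      congr 1
      exact (InnerProductSpace.toDual_symm_apply : inner ℝ ((InnerProductSpace.toDual ℝ (EuclideanSpace ℝ (Fin N))).symm
        (fderiv ℝ u y)) ξ = fderiv ℝ u y ξ)
    calc |w y| = |(inner ℝ (gradient u y - A) ξ : ℝ)| := by rw [h1]
      _ ≤ ‖gradient u y - A‖ * ‖ξ‖ := abs_real_inner_le_norm _ _
      _ = ‖gradient u y - A‖ := by rw [hξ, mul_one]
  -- integral chain
  have hIm : IntegrableOn (fun x => |w (x + c • ξ)| ^ p) Bm := by
    refine ContinuousOn.integrableOn_compact (isCompact_closedBall _ _) ?_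
    refine ContinuousOn.rpow_const (ContinuousOn.abs ?_) fun x _ => Or.inr (le_of_lt hp0)
    refine hwU.comp ((continuous_id.add continuous_const).continuousOn) ?_
    intro x hx
    refine hTU (hBpT ?_)
    rw [hBp_def, mem_closedBall, dist_eq_norm]
    rw [hBm_def, mem_closedBall, dist_eq_norm] at hx
    have hid : x + c • ξ - (z + (3*ρ/4) • ξ) = x - (z - (3*ρ/4) • ξ) := by
      rw [hc_def]; module
    rwa [hid]
  have hI2 : IntegrableOn (fun x => |w x| ^ p) Bm := hIT.mono_set hBmT
  have step1 : (volume Bm).toReal * b ^ p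
      ≤ ∫ x in Bm, (|w (x + c • ξ)| ^ p + |w x| ^ p) := by
    have := setIntegral_mono_on
      (integrableOn_const measure_closedBall_lt_top.ne)
      (hIm.add hI2) measurableSet_closedBall hpt
    exact (by simpa [smul_eq_mul] using this : volume.real Bm * b ^ p ≤ _)
  have step2 : ∫ x in Bm, (|w (x + c • ξ)| ^ p + |w x| ^ p)
      = (∫ x in Bm, |w (x + c • ξ)| ^ p) + ∫ x in Bm, |w x| ^ p :=
    integral_add hIm hI2
  have step3 : ∫ x in Bm, |w (x + c • ξ)| ^ p = ∫ y in Bp, |w y| ^ p := by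
    have hmp : MeasurePreserving (fun x : EuclideanSpace ℝ (Fin N) => x + c • ξ) volume volume :=
      measurePreserving_add_right volume _
    have h := hmp.setIntegral_image_emb
      (MeasurableEquiv.measurableEmbedding (MeasurableEquiv.addRight (c • ξ)))
      (fun y => |w y| ^ p) Bm
    rw [← h, hBm_def, image_add_right_closedBall']
    have : z - (3*ρ/4) • ξ + c • ξ = z + (3*ρ/4) • ξ := by rw [hc_def]; module
    rw [this, hBp_def]
  have hwnn : 0 ≤ᶠ[ae (volume.restrict T)] (fun y => |w y| ^ p) :=
    Filter.Eventually.of_forall fun y => Real.rpow_nonneg (abs_nonneg _) p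
  have step4 : ∫ y in Bp, |w y| ^ p ≤ ∫ y in T, |w y| ^ p :=
    setIntegral_mono_set hIT hwnn (HasSubset.Subset.eventuallyLE hBpT)
  have step5 : ∫ y in Bm, |w y| ^ p ≤ ∫ y in T, |w y| ^ p :=
    setIntegral_mono_set hIT hwnn (HasSubset.Subset.eventuallyLE hBmT)
  have step6 : ∫ y in T, |w y| ^ p ≤ ∫ y in T, ‖gradient u y - A‖ ^ p :=
    setIntegral_mono_on hIT hGT hT.measurableSet
      fun y _ => Real.rpow_le_rpow (abs_nonneg _) (hwle y) (le_of_lt hp0)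
  have hcmain : (volume Bm).toReal * b ^ p ≤ 2 * ∫ y in T, ‖gradient u y - A‖ ^ p := by
    rw [step2] at step1
    linarith
  -- volume computation
  have hvol : (volume Bm).toReal
      = (ρ/4) ^ N * (volume (ball (0 : EuclideanSpace ℝ (Fin N)) 1)).toReal := by
    rw [hBm_def, Measure.addHaar_closedBall volume _ (by positivity : (0:ℝ) ≤ ρ/4),
      finrank_euclideanSpace_fin, ENNReal.toReal_mul, ENNReal.toReal_ofReal (by positivity)]
  rw [hvol] at hcmain
  -- final arithmetic
  have hbp : b ^ p = (3/4 : ℝ) ^ p * ρ ^ p * m ^ p := by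
    rw [hb_def, Real.mul_rpow (by positivity) (le_of_lt hmpos),
      Real.mul_rpow (by positivity) (le_of_lt hρ)]
  have hrp : ρ ^ ((N : ℝ) + p) = ρ ^ N * ρ ^ p := by
    rw [Real.rpow_add hρ, Real.rpow_natCast]
  have hdiv : ((ρ/4) ^ N : ℝ) = ρ ^ N * (4:ℝ)⁻¹ ^ N := by
    rw [div_pow, div_eq_mul_inv, ← inv_pow]
  calc (2⁻¹ * (4 : ℝ)⁻¹ ^ N * (3 / 4 : ℝ) ^ p * (volume (ball (0 : EuclideanSpace ℝ (Fin N)) 1)).toReal)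
        * ρ ^ ((N : ℝ) + p) * m ^ p
      = 2⁻¹ * ((ρ/4) ^ N * (volume (ball (0 : EuclideanSpace ℝ (Fin N)) 1)).toReal * b ^ p) := by
        rw [hbp, hrp, hdiv]; ring
    _ ≤ ∫ y in T, ‖gradient u y - A‖ ^ p := by linarith

private lemma contQ' {N : ℕ} {u : EuclideanSpace ℝ (Fin N) → ℝ}
    {U : Set (EuclideanSpace ℝ (Fin N))} (hU : IsOpen U) (hu : ContDiffOn ℝ 2 u U)
    (ξ : EuclideanSpace ℝ (Fin N)) :
    ContinuousOn (fun x => iteratedFDeriv ℝ 2 u x ![ξ, ξ]) U := by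
  have hfd1 : ContDiffOn ℝ 1 (fderiv ℝ u) U := hu.fderiv_of_isOpen (m := 1) hU (by norm_num)
  have h2 : ContinuousOn (fderiv ℝ (fderiv ℝ u)) U :=
    hfd1.continuousOn_fderiv_of_isOpen hU le_rfl
  have h3 : ContinuousOn (fun x => fderiv ℝ (fderiv ℝ u) x ξ ξ) U :=
    (h2.clm_apply continuousOn_const).clm_apply continuousOn_const
  refine h3.congr fun y _ => ?_
  rw [iteratedFDeriv_two_apply]
  simp

/-- Lower bound for the best `L^p` approximation of a gradient by constants
(cf. Lemma on uniformly convex directions): for `p ∈ (1,∞)` there is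
`C = C(N,p) > 0` such that for every compact convex `T` containing a closed
ball of radius `ρ > 0` and every `u` of class `C²` on a neighborhood of `T`,
`inf_A ∫_T |∇u - A|^p ≥ C ρ^{N+p} max_{ξ ∈ S^{N-1}} min_{x ∈ T} |ξᵀD²u(x)ξ|^p`;
and the same bound holds, for each coordinate direction `k` with
`inf_T |∂²_{x_k} u| > 0`, with the max-min replaced by
`(min_{x ∈ T} |e_kᵀ D²u(x) e_k|)^p`. -/
theorem gradient_constant_approximation_lower_bound (N : ℕ) (hN : 1 ≤ N)
    (p : ℝ) (hp1 : 1 < p) :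
    ∃ C : ℝ, 0 < C ∧
      (∀ T : Set (EuclideanSpace ℝ (Fin N)), IsCompact T → Convex ℝ T →
        ∀ z : EuclideanSpace ℝ (Fin N), ∀ ρ : ℝ, 0 < ρ → closedBall z ρ ⊆ T →
        ∀ u : EuclideanSpace ℝ (Fin N) → ℝ, ∀ U : Set (EuclideanSpace ℝ (Fin N)),
          IsOpen U → T ⊆ U → ContDiffOn ℝ 2 u U →
        C * ρ ^ ((N : ℝ) + p) *
            (⨆ ξ : sphere (0 : EuclideanSpace ℝ (Fin N)) 1, ⨅ x : T,
              |iteratedFDeriv ℝ 2 u (x : EuclideanSpace ℝ (Fin N))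
                ![(ξ : EuclideanSpace ℝ (Fin N)), (ξ : EuclideanSpace ℝ (Fin N))]| ^ p)
          ≤ ⨅ A : EuclideanSpace ℝ (Fin N), ∫ x in T, ‖gradient u x - A‖ ^ p) ∧
      (∀ T : Set (EuclideanSpace ℝ (Fin N)), IsCompact T → Convex ℝ T →
        ∀ z : EuclideanSpace ℝ (Fin N), ∀ ρ : ℝ, 0 < ρ → closedBall z ρ ⊆ T →
        ∀ u : EuclideanSpace ℝ (Fin N) → ℝ, ∀ U : Set (EuclideanSpace ℝ (Fin N)),
          IsOpen U → T ⊆ U → ContDiffOn ℝ 2 u U →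
        ∀ k : Fin N,
          0 < (⨅ x : T, |iteratedFDeriv ℝ 2 u (x : EuclideanSpace ℝ (Fin N))
              ![EuclideanSpace.single k (1 : ℝ), EuclideanSpace.single k (1 : ℝ)]|) →
          C * ρ ^ ((N : ℝ) + p) *
              (⨅ x : T, |iteratedFDeriv ℝ 2 u (x : EuclideanSpace ℝ (Fin N))
                ![EuclideanSpace.single k (1 : ℝ), EuclideanSpace.single k (1 : ℝ)]|) ^ p
            ≤ ⨅ A : EuclideanSpace ℝ (Fin N), ∫ x in T, ‖gradient u x - A‖ ^ p) := by
  have hp0 : (0:ℝ) < p := lt_trans one_pos hp1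
  have hVpos : 0 < (volume (ball (0 : EuclideanSpace ℝ (Fin N)) 1)).toReal :=
    ENNReal.toReal_pos (measure_ball_pos volume 0 one_pos).ne' measure_ball_lt_top.ne
  have hCpos : 0 < 2⁻¹ * (4 : ℝ)⁻¹ ^ N * (3 / 4 : ℝ) ^ p
      * (volume (ball (0 : EuclideanSpace ℝ (Fin N)) 1)).toReal :=
    mul_pos (mul_pos (mul_pos (by norm_num) (pow_pos (by norm_num) N))
      (Real.rpow_pos_of_pos (by norm_num) p)) hVpos
  refine ⟨2⁻¹ * (4 : ℝ)⁻¹ ^ N * (3 / 4 : ℝ) ^ p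
      * (volume (ball (0 : EuclideanSpace ℝ (Fin N)) 1)).toReal, hCpos, ?_, ?_⟩
  · intro T hT hTc z ρ hρ hball u U hU hTU hu
    have hzT : z ∈ T := hball (mem_closedBall_self (le_of_lt hρ))
    have hTne : T.Nonempty := ⟨z, hzT⟩
    haveI : Nonempty T := hTne.to_subtype
    have hRnn : (0:ℝ) ≤ ⨅ A : EuclideanSpace ℝ (Fin N), ∫ x in T, ‖gradient u x - A‖ ^ p :=
      Real.iInf_nonneg fun A =>
        setIntegral_nonneg hT.measurableSet fun x _ => Real.rpow_nonneg (norm_nonneg _) p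
    have hfac : 0 < (2⁻¹ * (4 : ℝ)⁻¹ ^ N * (3 / 4 : ℝ) ^ p
        * (volume (ball (0 : EuclideanSpace ℝ (Fin N)) 1)).toReal) * ρ ^ ((N : ℝ) + p) :=
      mul_pos hCpos (Real.rpow_pos_of_pos hρ _)
    rw [← le_div_iff₀' hfac]
    refine Real.iSup_le (fun ξ => ?_) (div_nonneg hRnn (le_of_lt hfac))
    rw [le_div_iff₀' hfac]
    have hcont : ContinuousOn (fun x => |iteratedFDeriv ℝ 2 u x
        ![(ξ : EuclideanSpace ℝ (Fin N)), (ξ : EuclideanSpace ℝ (Fin N))]|) T :=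
      ((contQ' hU hu _).mono hTU).abs
    obtain ⟨x₀, hx₀T, hx₀min⟩ := hT.exists_isMinOn hTne hcont
    have hm0 : 0 ≤ |iteratedFDeriv ℝ 2 u x₀
        ![(ξ : EuclideanSpace ℝ (Fin N)), (ξ : EuclideanSpace ℝ (Fin N))]| := abs_nonneg _
    have hmlb : ∀ x ∈ T, |iteratedFDeriv ℝ 2 u x₀
        ![(ξ : EuclideanSpace ℝ (Fin N)), (ξ : EuclideanSpace ℝ (Fin N))]|
        ≤ |iteratedFDeriv ℝ 2 u x
        ![(ξ : EuclideanSpace ℝ (Fin N)), (ξ : EuclideanSpace ℝ (Fin N))]| :=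
      fun x hx => hx₀min hx
    have hiInf_le : (⨅ x : T, |iteratedFDeriv ℝ 2 u (x : EuclideanSpace ℝ (Fin N))
        ![(ξ : EuclideanSpace ℝ (Fin N)), (ξ : EuclideanSpace ℝ (Fin N))]| ^ p)
        ≤ |iteratedFDeriv ℝ 2 u x₀
        ![(ξ : EuclideanSpace ℝ (Fin N)), (ξ : EuclideanSpace ℝ (Fin N))]| ^ p := by
      refine ciInf_le ⟨0, ?_⟩ (⟨x₀, hx₀T⟩ : T)
      rintro r ⟨x, rfl⟩
      exact Real.rpow_nonneg (abs_nonneg _) p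
    calc (2⁻¹ * (4 : ℝ)⁻¹ ^ N * (3 / 4 : ℝ) ^ p
          * (volume (ball (0 : EuclideanSpace ℝ (Fin N)) 1)).toReal) * ρ ^ ((N : ℝ) + p)
          * (⨅ x : T, |iteratedFDeriv ℝ 2 u (x : EuclideanSpace ℝ (Fin N))
              ![(ξ : EuclideanSpace ℝ (Fin N)), (ξ : EuclideanSpace ℝ (Fin N))]| ^ p)
        ≤ (2⁻¹ * (4 : ℝ)⁻¹ ^ N * (3 / 4 : ℝ) ^ p
          * (volume (ball (0 : EuclideanSpace ℝ (Fin N)) 1)).toReal) * ρ ^ ((N : ℝ) + p)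
          * |iteratedFDeriv ℝ 2 u x₀
              ![(ξ : EuclideanSpace ℝ (Fin N)), (ξ : EuclideanSpace ℝ (Fin N))]| ^ p :=
        mul_le_mul_of_nonneg_left hiInf_le (le_of_lt hfac)
      _ ≤ ⨅ A : EuclideanSpace ℝ (Fin N), ∫ x in T, ‖gradient u x - A‖ ^ p :=
        le_ciInf fun A => core_bound p hp1 hT hTc hρ hball hU hTU hu
          (norm_eq_of_mem_sphere ξ) hm0 hmlb A
  · intro T hT hTc z ρ hρ hball u U hU hTU hu k hkpos
    have hzT : z ∈ T := hball (mem_closedBall_self (le_of_lt hρ))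
    haveI : Nonempty T := Set.Nonempty.to_subtype ⟨z, hzT⟩
    have hek : ‖EuclideanSpace.single k (1:ℝ)‖ = 1 := by
      rw [EuclideanSpace.norm_single]; norm_num
    have hm0 : 0 ≤ ⨅ x : T, |iteratedFDeriv ℝ 2 u (x : EuclideanSpace ℝ (Fin N))
        ![EuclideanSpace.single k (1 : ℝ), EuclideanSpace.single k (1 : ℝ)]| := le_of_lt hkpos
    have hmlb : ∀ x ∈ T, (⨅ x : T, |iteratedFDeriv ℝ 2 u (x : EuclideanSpace ℝ (Fin N))
        ![EuclideanSpace.single k (1 : ℝ), EuclideanSpace.single k (1 : ℝ)]|)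
        ≤ |iteratedFDeriv ℝ 2 u x
        ![EuclideanSpace.single k (1 : ℝ), EuclideanSpace.single k (1 : ℝ)]| := by
      intro x hx
      refine ciInf_le ⟨0, ?_⟩ (⟨x, hx⟩ : T)
      rintro r ⟨y, rfl⟩
      exact abs_nonneg _
    exact le_ciInf fun A => core_bound p hp1 hT hTc hρ hball hU hTU hu hek hm0 hmlb A
end

section
/- Let N ≥ 3 and let c₂ ≥ c₁ > 0 and r₀ ∈ (0, 1/2). Let f : (0, r₀) → ℝ be a measurable function satisfying c₁ r^{−N/2} ≤ f(r) ≤ c₂ r^{−N/2} for all r ∈ (0, r₀). Then there exist a constant c > 0 and h₁ ∈ (0, r₀) such that for every h ∈ (0, h₁) and every A ∈ ℝ: ∫_0^h r^{N−1} ( f(r) − A )² (log r)^{−2} dr ≥ c / |log h|. -/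
open MeasureTheory Set

private lemma hasDeriv_negInvLog {r : ℝ} (hr0 : 0 < r) (hr1 : r < 1) :
    HasDerivAt (fun x => -(Real.log x)⁻¹) (1 / (r * (Real.log r) ^ 2)) r := by
  have hlog : Real.log r ≠ 0 := ne_of_lt (Real.log_neg hr0 hr1)
  have h1 : HasDerivAt Real.log r⁻¹ r := Real.hasDerivAt_log (ne_of_gt hr0)
  have h2 := (h1.inv hlog).neg
  refine h2.congr_deriv ?_
  field_simp

private lemma kernel_integrableOn {h : ℝ} (h0 : 0 < h) (h1 : h < 1) :
    IntegrableOn (fun r => 1 / (r * (Real.log r) ^ 2)) (Ioo 0 h) := by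
  have hcont : ContinuousOn (fun x : ℝ => -(Real.log x)⁻¹) (Icc 0 h) := by
    intro x hx
    rcases eq_or_lt_of_le hx.1 with rfl | hx0
    · -- continuity at 0
      rw [← Set.Ioc_insert_left h0.le, continuousWithinAt_insert_self]
      have hlim : Filter.Tendsto (fun x : ℝ => -(Real.log x)⁻¹) (nhdsWithin 0 (Ioi 0))
          (nhds 0) := by
        have h1 : Filter.Tendsto (fun x : ℝ => -Real.log x) (nhdsWithin 0 (Ioi 0))
            Filter.atTop := Filter.tendsto_neg_atBot_atTop.comp
              Real.tendsto_log_nhdsGT_zero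
        have h2 := h1.inv_tendsto_atTop
        refine h2.congr (fun x => ?_)
        simp [Pi.inv_apply, inv_neg]
      have : ContinuousWithinAt (fun x : ℝ => -(Real.log x)⁻¹) (Ioi 0) 0 := by
        unfold ContinuousWithinAt
        simpa using hlim
      exact this.mono Set.Ioc_subset_Ioi_self
    · have hlog : Real.log x ≠ 0 :=
        ne_of_lt (Real.log_neg hx0 (lt_of_le_of_lt hx.2 h1))
      exact (((Real.continuousAt_log (ne_of_gt hx0)).inv₀ hlog).neg).continuousWithinAt
  have key := intervalIntegral.integrableOn_deriv_of_nonneg hcont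
    (fun x hx => hasDeriv_negInvLog hx.1 (hx.2.trans h1))
    (fun x hx => by have h1 := hx.1; positivity)
  exact key.mono_set Ioo_subset_Ioc_self

private lemma kernel_integral {a b : ℝ} (ha : 0 < a) (hab : a < b) (hb : b < 1) :
    ∫ r in Ioo a b, 1 / (r * (Real.log r) ^ 2)
      = (Real.log a)⁻¹ - (Real.log b)⁻¹ := by
  have hint : IntervalIntegrable (fun r => 1 / (r * (Real.log r) ^ 2)) volume a b := by
    apply ContinuousOn.intervalIntegrable
    apply ContinuousOn.div continuousOn_const
    · exact continuousOn_id.mul ((Real.continuousOn_log.mono (fun x hx => by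
        rw [Set.uIcc_of_le hab.le] at hx
        exact ne_of_gt (lt_of_lt_of_le ha hx.1))).pow 2)
    · intro x hx
      rw [Set.uIcc_of_le hab.le] at hx
      have hx0 : 0 < x := lt_of_lt_of_le ha hx.1
      have hlog : Real.log x ≠ 0 := ne_of_lt (Real.log_neg hx0 (lt_of_le_of_lt hx.2 hb))
      positivity
  have := intervalIntegral.integral_eq_sub_of_hasDerivAt (f := fun x => -(Real.log x)⁻¹)
    (f' := fun r => 1 / (r * (Real.log r) ^ 2)) (a := a) (b := b)
    (fun x hx => by
      rw [Set.uIcc_of_le hab.le] at hx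
      exact hasDeriv_negInvLog (lt_of_lt_of_le ha hx.1) (lt_of_le_of_lt hx.2 hb)) hint
  rw [intervalIntegral.integral_of_le hab.le, MeasureTheory.integral_Ioc_eq_integral_Ioo] at this
  rw [this]; ring

private lemma case1_arith {x : ℝ} (hx : x < 0) :
    ((2:ℝ) * x)⁻¹ - ((3:ℝ)/2 * x)⁻¹ = 1 / (6 * (-x)) := by
  have hx' : x ≠ 0 := ne_of_lt hx
  field_simp
  ring

private lemma case2_arith {x : ℝ} (hx : x < 0) :
    ((5:ℝ)/4 * x)⁻¹ - x⁻¹ = 1 / (5 * (-x)) := by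
  have hx' : x ≠ 0 := ne_of_lt hx
  field_simp
  ring


set_option maxHeartbeats 2000000 in
/-- Key lower bound for approximation by constants of a radial derivative
behaving like `r^{-N/2}`: if `c₁ r^{-N/2} ≤ f(r) ≤ c₂ r^{-N/2}` on `(0, r₀)`,
then there are `c > 0` and `h₁ ∈ (0, r₀)` such that for all `h ∈ (0, h₁)` and
all `A ∈ ℝ`, `∫_0^h r^{N-1} (f(r) - A)² (log r)^{-2} dr ≥ c/|log h|`. -/
theorem radial_constant_approx_lower_bound (N : ℕ) (hN : 3 ≤ N)
    (c₁ c₂ r₀ : ℝ) (hc₁ : 0 < c₁) (hc₁₂ : c₁ ≤ c₂)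
    (hr₀ : r₀ ∈ Ioo (0 : ℝ) (1 / 2))
    (f : ℝ → ℝ) (hf_meas : Measurable f)
    (hf : ∀ r ∈ Ioo (0 : ℝ) r₀,
      c₁ * r ^ (-(N : ℝ) / 2) ≤ f r ∧ f r ≤ c₂ * r ^ (-(N : ℝ) / 2)) :
    ∃ c : ℝ, 0 < c ∧ ∃ h₁ ∈ Ioo (0 : ℝ) r₀, ∀ h ∈ Ioo (0 : ℝ) h₁, ∀ A : ℝ,
      c / |Real.log h|
        ≤ ∫ r in Ioo (0 : ℝ) h, r ^ (N - 1) * (f r - A) ^ 2 / (Real.log r) ^ 2 := by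
  have hc₂ : 0 < c₂ := lt_of_lt_of_le hc₁ hc₁₂
  have hN3 : (3 : ℝ) ≤ (N : ℝ) := by exact_mod_cast hN
  set m : ℝ := min (c₁ / (4 * c₂)) (min (c₁ ^ 2 / 16) 1) with hm_def
  have hm : 0 < m := lt_min (by positivity) (lt_min (by positivity) one_pos)
  refine ⟨min (c₁ ^ 2 / 24) (1 / 5), by positivity,
    min (r₀ / 2) (m ^ ((8 : ℝ) / 3)), ⟨?_, ?_⟩, ?_⟩
  · exact lt_min (by linarith [hr₀.1]) (Real.rpow_pos_of_pos hm _)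
  · exact lt_of_le_of_lt (min_le_left _ _) (by linarith [hr₀.1])
  intro h hh A
  obtain ⟨h0, hh1⟩ := hh
  have hhr2 : h < r₀ / 2 := lt_of_lt_of_le hh1 (min_le_left _ _)
  have hhr : h < r₀ := by linarith [hr₀.1]
  have hhalf : h ≤ 1 / 2 := by linarith [hr₀.2]
  have hh1' : h < 1 := by linarith
  have hlogh_neg : Real.log h < 0 := Real.log_neg h0 hh1'
  set L : ℝ := -Real.log h with hL
  have hL0 : 0 < L := by simp only [hL]; linarith
  have habs : |Real.log h| = L := abs_of_neg hlogh_neg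
  -- smallness of h
  have hsmall : h ^ ((3 : ℝ) / 8) ≤ m := by
    have h1 : h ^ ((3 : ℝ) / 8) ≤ (m ^ ((8 : ℝ) / 3)) ^ ((3 : ℝ) / 8) :=
      Real.rpow_le_rpow h0.le (le_of_lt (lt_of_lt_of_le hh1 (min_le_right _ _)))
        (by norm_num)
    have h2 : (m ^ ((8 : ℝ) / 3)) ^ ((3 : ℝ) / 8) = m := by
      rw [← Real.rpow_mul hm.le]
      norm_num
    linarith
  have s₁ : h ^ ((N : ℝ) / 8) ≤ c₁ / (4 * c₂) :=
    le_trans (le_trans (Real.rpow_le_rpow_of_exponent_ge h0 hh1'.le (by linarith))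
      hsmall) (min_le_left _ _)
  have s₂ : h ^ ((N : ℝ) / 4) ≤ c₁ ^ 2 / 16 :=
    le_trans (le_trans (Real.rpow_le_rpow_of_exponent_ge h0 hh1'.le (by linarith))
      hsmall) (le_trans (min_le_right _ _) (min_le_left _ _))
  -- the integrand
  set g : ℝ → ℝ := fun r => r ^ (N - 1) * (f r - A) ^ 2 / (Real.log r) ^ 2 with hg_def
  have hgmeas : Measurable g :=
    ((measurable_id.pow_const (N - 1)).mul
      ((hf_meas.sub measurable_const).pow_const 2)).div
      (Real.measurable_log.pow_const 2)
  -- key power identity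
  have hpowid : ∀ r : ℝ, 0 < r → r ^ (N - 1) * (r ^ (-(N : ℝ) / 2)) ^ 2 = 1 / r := by
    intro r hr
    rw [← Real.rpow_natCast r (N - 1), ← Real.rpow_natCast (r ^ (-(N : ℝ) / 2)) 2,
      ← Real.rpow_mul hr.le, ← Real.rpow_add hr, one_div, ← Real.rpow_neg_one r]
    congr 1
    push_cast [Nat.cast_sub (by omega : 1 ≤ N)]
    ring
  -- nonnegativity of g on (0,∞)
  have hgnn : ∀ r : ℝ, 0 < r → 0 ≤ g r := by
    intro r hr
    simp only [hg_def]
    apply div_nonneg _ (sq_nonneg _)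
    exact mul_nonneg (pow_nonneg hr.le _) (sq_nonneg _)
  -- integrability of g on Ioo 0 h
  have hgint : IntegrableOn g (Ioo 0 h) := by
    apply Integrable.mono'
      (g := fun r => 2 * c₂ ^ 2 * (1 / (r * (Real.log r) ^ 2)) + 2 * A ^ 2 / (Real.log 2) ^ 2)
    · exact ((kernel_integrableOn h0 hh1').const_mul _).add
        (integrableOn_const measure_Ioo_lt_top.ne)
    · exact hgmeas.aestronglyMeasurable.restrict
    · refine (ae_restrict_mem measurableSet_Ioo).mono (fun r hr => ?_)
      obtain ⟨hr0, hrh⟩ := hr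
      have hr1 : r < 1 := lt_trans hrh hh1'
      have hlogr_neg : Real.log r < 0 := Real.log_neg hr0 hr1
      have hlogrne : Real.log r ≠ 0 := ne_of_lt hlogr_neg
      have hlogr2 : 0 < (Real.log r) ^ 2 := by positivity
      have hlog20 : (0:ℝ) < (Real.log 2) ^ 2 := by
        have := Real.log_pos one_lt_two; positivity
      have hlog2r : Real.log 2 ≤ -Real.log r := by
        have h1 : Real.log h ≤ Real.log (1 / 2) := Real.log_le_log h0 hhalf
        have h2 : Real.log r < Real.log h := Real.log_lt_log hr0 hrh
        rw [Real.log_div one_ne_zero two_ne_zero, Real.log_one] at h1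
        linarith
      have hlogsq : (Real.log 2) ^ 2 ≤ (Real.log r) ^ 2 := by
        have := pow_le_pow_left₀ (Real.log_nonneg one_le_two) hlog2r 2
        simpa [neg_pow] using this
      rw [Real.norm_of_nonneg (hgnn r hr0)]
      have hfr := hf r ⟨hr0, lt_trans hrh hhr⟩
      set u := r ^ (-(N : ℝ) / 2) with hu_def
      have hu : 0 < u := Real.rpow_pos_of_pos hr0 _
      have hrp : (0:ℝ) ≤ r ^ (N - 1) := pow_nonneg hr0.le _
      have hsq : (f r - A) ^ 2 ≤ 2 * (f r) ^ 2 + 2 * A ^ 2 := by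
        nlinarith [sq_nonneg (f r + A)]
      have hfpos : 0 ≤ f r := le_trans (by positivity) hfr.1
      have hf2 : (f r) ^ 2 ≤ c₂ ^ 2 * u ^ 2 := by
        have := pow_le_pow_left₀ hfpos hfr.2 2
        rwa [mul_pow] at this
      have hid := hpowid r hr0
      have hrpow1 : r ^ (N - 1) ≤ 1 := pow_le_one₀ hr0.le hr1.le
      have h2 : r ^ (N - 1) * (f r) ^ 2 ≤ c₂ ^ 2 * (1 / r) := by
        calc r ^ (N - 1) * (f r) ^ 2 ≤ r ^ (N - 1) * (c₂ ^ 2 * u ^ 2) :=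
              mul_le_mul_of_nonneg_left hf2 hrp
          _ = c₂ ^ 2 * (r ^ (N - 1) * u ^ 2) := by ring
          _ = c₂ ^ 2 * (1 / r) := by rw [hid]
      have hnum : r ^ (N - 1) * (f r - A) ^ 2 ≤ 2 * c₂ ^ 2 * (1 / r) + 2 * A ^ 2 := by
        calc r ^ (N - 1) * (f r - A) ^ 2
            ≤ r ^ (N - 1) * (2 * (f r) ^ 2 + 2 * A ^ 2) :=
              mul_le_mul_of_nonneg_left hsq hrp
          _ = 2 * (r ^ (N - 1) * (f r) ^ 2) + 2 * (r ^ (N - 1) * A ^ 2) := by ring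
          _ ≤ 2 * (c₂ ^ 2 * (1 / r)) + 2 * (1 * A ^ 2) := by
              have h3 := mul_le_mul_of_nonneg_right hrpow1 (sq_nonneg A)
              linarith
          _ = 2 * c₂ ^ 2 * (1 / r) + 2 * A ^ 2 := by ring
      calc g r = (r ^ (N - 1) * (f r - A) ^ 2) / (Real.log r) ^ 2 := rfl
        _ ≤ (2 * c₂ ^ 2 * (1 / r) + 2 * A ^ 2) / (Real.log r) ^ 2 :=
            (div_le_div_iff_of_pos_right hlogr2).2 hnum
        _ = 2 * c₂ ^ 2 * (1 / (r * (Real.log r) ^ 2)) + 2 * A ^ 2 / (Real.log r) ^ 2 := by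
            field_simp
        _ ≤ 2 * c₂ ^ 2 * (1 / (r * (Real.log r) ^ 2)) + 2 * A ^ 2 / (Real.log 2) ^ 2 := by
            have := div_le_div_of_nonneg_left (by positivity : (0:ℝ) ≤ 2 * A ^ 2)
              hlog20 hlogsq
            linarith
  -- the key estimate machine
  have key : ∀ a b C : ℝ, 0 < a → a < b → b ≤ h → 0 ≤ C →
      (∀ r ∈ Ioo a b, C * (1 / (r * (Real.log r) ^ 2)) ≤ g r) →
      C * ((Real.log a)⁻¹ - (Real.log b)⁻¹) ≤ ∫ r in Ioo (0 : ℝ) h, g r := by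
    intro a b C ha hab hbh hC hpt
    have hb1 : b < 1 := lt_of_le_of_lt hbh hh1'
    have hsub : Ioo a b ⊆ Ioo (0 : ℝ) h := Ioo_subset_Ioo ha.le hbh
    have hker : IntegrableOn (fun r => C * (1 / (r * (Real.log r) ^ 2))) (Ioo a b) :=
      ((kernel_integrableOn h0 hh1').mono_set hsub).const_mul C
    have step1 : C * ((Real.log a)⁻¹ - (Real.log b)⁻¹)
        = ∫ r in Ioo a b, C * (1 / (r * (Real.log r) ^ 2)) := by
      rw [MeasureTheory.integral_const_mul, kernel_integral ha hab hb1]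
    have step2 : (∫ r in Ioo a b, C * (1 / (r * (Real.log r) ^ 2)))
        ≤ ∫ r in Ioo a b, g r :=
      setIntegral_mono_on hker (hgint.mono_set hsub) measurableSet_Ioo hpt
    have step3 : (∫ r in Ioo a b, g r) ≤ ∫ r in Ioo (0 : ℝ) h, g r := by
      apply setIntegral_mono_set hgint
      · exact (ae_restrict_mem measurableSet_Ioo).mono (fun r hr => hgnn r hr.1)
      · exact HasSubset.Subset.eventuallyLE hsub
    rw [step1]
    exact le_trans step2 step3
  -- interval endpoints
  set a₁ : ℝ := h ^ (2 : ℝ) with ha₁_def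
  set b₁ : ℝ := h ^ ((3 : ℝ) / 2) with hb₁_def
  set a₂ : ℝ := h ^ ((5 : ℝ) / 4) with ha₂_def
  have ha₁ : 0 < a₁ := Real.rpow_pos_of_pos h0 _
  have hb₁ : 0 < b₁ := Real.rpow_pos_of_pos h0 _
  have ha₂ : 0 < a₂ := Real.rpow_pos_of_pos h0 _
  have hab₁ : a₁ < b₁ := Real.rpow_lt_rpow_of_exponent_gt h0 hh1' (by norm_num)
  have hb₁h : b₁ ≤ h := by
    have h2 := Real.rpow_lt_rpow_of_exponent_gt h0 hh1' (by norm_num : (1:ℝ) < 3/2)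
    rw [Real.rpow_one] at h2
    exact h2.le
  have ha₂h : a₂ < h := by
    have h2 := Real.rpow_lt_rpow_of_exponent_gt h0 hh1' (by norm_num : (1:ℝ) < 5/4)
    rw [Real.rpow_one] at h2
    exact h2
  rw [habs]
  set T : ℝ := c₁ / 2 * b₁ ^ (-(N : ℝ) / 2) with hT_def
  have hbpow : 0 < b₁ ^ (-(N : ℝ) / 2) := Real.rpow_pos_of_pos hb₁ _
  have hT : 0 < T := by positivity
  rcases le_or_gt A T with hA | hA
  · -- Case 1 : A small, use interval (a₁, b₁)
    have hpt : ∀ r ∈ Ioo a₁ b₁, c₁ ^ 2 / 4 * (1 / (r * (Real.log r) ^ 2)) ≤ g r := by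
      intro r hr
      have hr0 : 0 < r := lt_trans ha₁ hr.1
      have hrh : r < h := lt_of_lt_of_le hr.2 hb₁h
      have hr1 : r < 1 := lt_trans hrh hh1'
      have hlogrne : Real.log r ≠ 0 := ne_of_lt (Real.log_neg hr0 hr1)
      have hlogr2 : 0 < (Real.log r) ^ 2 := by positivity
      have hfr := hf r ⟨hr0, lt_trans hrh hhr⟩
      set u := r ^ (-(N : ℝ) / 2) with hu_def
      have hu : 0 < u := Real.rpow_pos_of_pos hr0 _
      have hvu : b₁ ^ (-(N : ℝ) / 2) ≤ u :=
        Real.rpow_le_rpow_of_nonpos hr0 hr.2.le (by linarith : -(N : ℝ) / 2 ≤ 0)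
      have hAf : c₁ / 2 * u ≤ f r - A := by
        have hTu : T ≤ c₁ / 2 * u := by
          rw [hT_def]
          exact mul_le_mul_of_nonneg_left hvu (by positivity)
        have := hfr.1
        have hAu : A ≤ c₁ / 2 * u := le_trans hA hTu
        linarith
      have hsq : (c₁ / 2 * u) ^ 2 ≤ (f r - A) ^ 2 :=
        pow_le_pow_left₀ (by positivity) hAf 2
      have hid : r ^ (N - 1) * (c₁ / 2 * u) ^ 2 = c₁ ^ 2 / 4 * (1 / r) := by
        have h' := hpowid r hr0
        calc r ^ (N - 1) * (c₁ / 2 * u) ^ 2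
            = (c₁ / 2) ^ 2 * (r ^ (N - 1) * u ^ 2) := by ring
          _ = (c₁ / 2) ^ 2 * (1 / r) := by rw [h']
          _ = c₁ ^ 2 / 4 * (1 / r) := by ring
      calc c₁ ^ 2 / 4 * (1 / (r * (Real.log r) ^ 2))
          = (c₁ ^ 2 / 4 * (1 / r)) / (Real.log r) ^ 2 := by
            field_simp
        _ = (r ^ (N - 1) * (c₁ / 2 * u) ^ 2) / (Real.log r) ^ 2 := by rw [hid]
        _ ≤ (r ^ (N - 1) * (f r - A) ^ 2) / (Real.log r) ^ 2 :=
            (div_le_div_iff_of_pos_right hlogr2).2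
              (mul_le_mul_of_nonneg_left hsq (pow_nonneg hr0.le _))
        _ = g r := rfl
    have hfinal := key a₁ b₁ (c₁ ^ 2 / 4) ha₁ hab₁ hb₁h (by positivity) hpt
    have heq : (Real.log a₁)⁻¹ - (Real.log b₁)⁻¹ = 1 / (6 * L) := by
      rw [ha₁_def, hb₁_def, Real.log_rpow h0, Real.log_rpow h0, hL]
      exact case1_arith hlogh_neg
    rw [heq] at hfinal
    calc min (c₁ ^ 2 / 24) (1 / 5) / L ≤ (c₁ ^ 2 / 24) / L :=
          (div_le_div_iff_of_pos_right hL0).2 (min_le_left _ _)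
      _ = c₁ ^ 2 / 4 * (1 / (6 * L)) := by ring
      _ ≤ _ := hfinal
  · -- Case 2 : A large, use interval (a₂, h)
    have hbig : c₂ * a₂ ^ (-(N : ℝ) / 2) ≤ T / 2 := by
      -- b₁ ^ (-N/2) = a₂ ^ (-N/2) * h ^ (-(N/8))
      have hsplit : b₁ ^ (-(N : ℝ) / 2)
          = a₂ ^ (-(N : ℝ) / 2) * h ^ (-((N : ℝ) / 8)) := by
        rw [hb₁_def, ha₂_def, ← Real.rpow_mul h0.le, ← Real.rpow_mul h0.le,
          ← Real.rpow_add h0]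
        congr 1
        ring
      have hinv : 4 * c₂ / c₁ ≤ h ^ (-((N : ℝ) / 8)) := by
        rw [Real.rpow_neg h0.le]
        have hx : 0 < h ^ ((N : ℝ) / 8) := Real.rpow_pos_of_pos h0 _
        have h1 : 4 * c₂ / c₁ * h ^ ((N : ℝ) / 8) ≤ 4 * c₂ / c₁ * (c₁ / (4 * c₂)) :=
          mul_le_mul_of_nonneg_left s₁ (by positivity)
        have h2 : 4 * c₂ / c₁ * (c₁ / (4 * c₂)) = 1 := by field_simp
        rw [← one_div, le_div_iff₀ hx]
        linarith
      have ha₂pow : 0 < a₂ ^ (-(N : ℝ) / 2) := Real.rpow_pos_of_pos ha₂ _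
      rw [hT_def, hsplit]
      calc c₂ * a₂ ^ (-(N : ℝ) / 2)
          = c₁ / 4 * (a₂ ^ (-(N : ℝ) / 2) * (4 * c₂ / c₁)) := by
            field_simp
        _ ≤ c₁ / 4 * (a₂ ^ (-(N : ℝ) / 2) * h ^ (-((N : ℝ) / 8))) := by
            apply mul_le_mul_of_nonneg_left _ (by positivity)
            exact mul_le_mul_of_nonneg_left hinv ha₂pow.le
        _ = c₁ / 2 * (a₂ ^ (-(N : ℝ) / 2) * h ^ (-((N : ℝ) / 8))) / 2 := by ring
    have hpt : ∀ r ∈ Ioo a₂ h, (1:ℝ) * (1 / (r * (Real.log r) ^ 2)) ≤ g r := by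
      intro r hr
      have hr0 : 0 < r := lt_trans ha₂ hr.1
      have hrh : r < h := hr.2
      have hr1 : r < 1 := lt_trans hrh hh1'
      have hlogrne : Real.log r ≠ 0 := ne_of_lt (Real.log_neg hr0 hr1)
      have hlogr2 : 0 < (Real.log r) ^ 2 := by positivity
      have hfr := hf r ⟨hr0, lt_trans hrh hhr⟩
      set u := r ^ (-(N : ℝ) / 2) with hu_def
      have hu : 0 < u := Real.rpow_pos_of_pos hr0 _
      have huw : u ≤ a₂ ^ (-(N : ℝ) / 2) :=
        Real.rpow_le_rpow_of_nonpos ha₂ hr.1.le (by linarith : -(N : ℝ) / 2 ≤ 0)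
      have hfsmall : f r ≤ T / 2 := by
        have := hfr.2
        have h1 : c₂ * u ≤ c₂ * a₂ ^ (-(N : ℝ) / 2) :=
          mul_le_mul_of_nonneg_left huw hc₂.le
        linarith [hbig]
      have hAf : T / 2 ≤ A - f r := by linarith
      have hsq : (T / 2) ^ 2 ≤ (f r - A) ^ 2 := by
        have h1 : (T / 2) ^ 2 ≤ (A - f r) ^ 2 := pow_le_pow_left₀ (by positivity) hAf 2
        have h2 : (A - f r) ^ 2 = (f r - A) ^ 2 := by ring
        linarith
      -- (T/2)^2 = c₁^2/16 * h ^ (-3N/2)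
      have hT2 : (T / 2) ^ 2 = c₁ ^ 2 / 16 * h ^ ((3 : ℝ) / 2 * (-(N : ℝ) / 2) * 2) := by
        rw [hT_def, hb₁_def, ← Real.rpow_mul h0.le, div_pow, mul_pow,
          ← Real.rpow_natCast (h ^ ((3 : ℝ) / 2 * (-(N : ℝ) / 2))) 2,
          ← Real.rpow_mul h0.le]
        push_cast
        ring
      -- 1 ≤ r^N * (c₁^2/16 * h^(-3N/2))
      have hone : 1 ≤ r ^ N * (c₁ ^ 2 / 16 * h ^ ((3 : ℝ) / 2 * (-(N : ℝ) / 2) * 2)) := by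
        have hrN : a₂ ^ N ≤ r ^ N := pow_le_pow_left₀ ha₂.le hr.1.le N
        have ha₂N : a₂ ^ N = h ^ ((5 : ℝ) / 4 * (N : ℝ)) := by
          rw [ha₂_def, ← Real.rpow_natCast (h ^ ((5 : ℝ) / 4)) N, ← Real.rpow_mul h0.le]
        have hcomb : h ^ ((5 : ℝ) / 4 * (N : ℝ)) * h ^ ((3 : ℝ) / 2 * (-(N : ℝ) / 2) * 2)
            = (h ^ ((N : ℝ) / 4))⁻¹ := by
          rw [← Real.rpow_add h0, ← Real.rpow_neg h0.le]
          congr 1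
          ring
        have hx : 0 < h ^ ((N : ℝ) / 4) := Real.rpow_pos_of_pos h0 _
        have h1 : 1 ≤ c₁ ^ 2 / 16 * (h ^ ((N : ℝ) / 4))⁻¹ := by
          rw [← div_eq_mul_inv, le_div_iff₀ hx]
          linarith [s₂]
        calc (1:ℝ) ≤ c₁ ^ 2 / 16 * (h ^ ((N : ℝ) / 4))⁻¹ := h1
          _ = c₁ ^ 2 / 16 * (h ^ ((5 : ℝ) / 4 * (N : ℝ))
              * h ^ ((3 : ℝ) / 2 * (-(N : ℝ) / 2) * 2)) := by rw [hcomb]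
          _ = a₂ ^ N * (c₁ ^ 2 / 16 * h ^ ((3 : ℝ) / 2 * (-(N : ℝ) / 2) * 2)) := by
              rw [ha₂N]; ring
          _ ≤ r ^ N * (c₁ ^ 2 / 16 * h ^ ((3 : ℝ) / 2 * (-(N : ℝ) / 2) * 2)) := by
              apply mul_le_mul_of_nonneg_right hrN
              positivity
      have hdiv : 1 / r ≤ r ^ (N - 1) * (T / 2) ^ 2 := by
        rw [hT2, div_le_iff₀ hr0]
        have hpow : r ^ (N - 1) * r = r ^ N := by
          rw [← pow_succ]
          congr 1
          omega
        calc (1:ℝ) ≤ r ^ N * (c₁ ^ 2 / 16 * h ^ ((3 : ℝ) / 2 * (-(N : ℝ) / 2) * 2)) := hone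
          _ = r ^ (N - 1) * (c₁ ^ 2 / 16 * h ^ ((3 : ℝ) / 2 * (-(N : ℝ) / 2) * 2)) * r := by
              rw [← hpow]; ring
      calc (1:ℝ) * (1 / (r * (Real.log r) ^ 2)) = (1 / r) / (Real.log r) ^ 2 := by
            field_simp
        _ ≤ (r ^ (N - 1) * (T / 2) ^ 2) / (Real.log r) ^ 2 :=
            (div_le_div_iff_of_pos_right hlogr2).2 hdiv
        _ ≤ (r ^ (N - 1) * (f r - A) ^ 2) / (Real.log r) ^ 2 :=
            (div_le_div_iff_of_pos_right hlogr2).2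
              (mul_le_mul_of_nonneg_left hsq (pow_nonneg hr0.le _))
        _ = g r := rfl
    have hfinal := key a₂ h 1 ha₂ ha₂h le_rfl zero_le_one hpt
    have heq : (Real.log a₂)⁻¹ - (Real.log h)⁻¹ = 1 / (5 * L) := by
      rw [ha₂_def, Real.log_rpow h0, hL]
      exact case2_arith hlogh_neg
    rw [heq, one_mul] at hfinal
    calc min (c₁ ^ 2 / 24) (1 / 5) / L ≤ (1 / 5) / L :=
          (div_le_div_iff_of_pos_right hL0).2 (min_le_right _ _)
      _ = 1 / (5 * L) := by ring
      _ ≤ _ := hfinal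
end
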